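/- Let G be a group with finite generating set Σ, let N be a characteristic subgroup of G (meaning φ(N) = N for every automorphism φ of G), let Q = G/N, and let Σ̄ ⊆ Q be the image of Σ under the quotient map. Then for every n ∈ ℕ, the number of Aut(Q)-orbits of Q containing an element of word length at most n with respect to Σ̄ is at most the number of Aut(G)-orbits of G containing an element of word length at most n with respect to Σ. In particular α_{Q,Σ̄} ≼ α_{G,Σ}. -/

import Mathlib

/-- The ball of radius `n` in a group with respect to a generating set `S`:
elements expressible as a product of at most `n` elements of `S ∪ S⁻¹`. -/
def wordBall {G : Type*} [Group G] (S : Set G) (n : ℕ) : Set G :=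
  {g | ∃ l : List G, (∀ x ∈ l, x ∈ S ∨ x⁻¹ ∈ S) ∧ l.length ≤ n ∧ l.prod = g}

/-- The automorphic growth function: the number of `Aut G`-orbits of `G`
containing an element of word length at most `n` with respect to `S`. -/
noncomputable def autGrowth {G : Type*} [Group G] (S : Set G) (n : ℕ) : ℕ :=
  Set.ncard (Quotient.mk (MulAction.orbitRel (MulAut G) G) '' wordBall S n)

def GrowthLe (f g : ℕ → ℕ) : Prop :=
  ∃ lam : ℕ, 0 < lam ∧ ∀ n, f n ≤ lam * g (lam * n + lam) + lam

def GrowthEquiv (f g : ℕ → ℕ) : Prop := GrowthLe f g ∧ GrowthLe g f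

private lemma wordBall_mono {G : Type*} [Group G] (S : Set G) {m n : ℕ} (h : m ≤ n) :
    wordBall S m ⊆ wordBall S n := by
  rintro g ⟨l, h1, h2, h3⟩
  exact ⟨l, h1, h2.trans h, h3⟩

private lemma wordBall_finite {G : Type*} [Group G] (S : Finset G) (n : ℕ) :
    (wordBall (S : Set G) n).Finite := by
  have hT : ((S : Set G) ∪ (S : Set G)⁻¹).Finite := S.finite_toSet.union S.finite_toSet.inv
  haveI : Finite ((S : Set G) ∪ (S : Set G)⁻¹ : Set G) := hT
  have hfin : {l : List ((S : Set G) ∪ (S : Set G)⁻¹ : Set G) | l.length ≤ n}.Finite :=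
    List.finite_length_le _ n
  apply (hfin.image (fun l => (l.map Subtype.val).prod)).subset
  rintro g ⟨l, h1, h2, rfl⟩
  refine ⟨l.attach.map (fun x => ⟨x.1, ?_⟩), by simpa using h2, ?_⟩
  · rcases h1 x.1 x.2 with h | h
    · exact Or.inl h
    · exact Or.inr (by simpa using h)
  · simp [List.map_map, Function.comp_def]

private lemma wordBall_lift {G : Type*} [Group G] (S : Set G) (N : Subgroup G) [N.Normal]
    (n : ℕ) : wordBall ((QuotientGroup.mk '' S) : Set (G ⧸ N)) n ⊆
      QuotientGroup.mk '' wordBall S n := by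
  rintro q ⟨l, h1, h2, rfl⟩
  suffices h : ∃ l' : List G, (∀ x ∈ l', x ∈ S ∨ x⁻¹ ∈ S) ∧ l'.length = l.length ∧
      QuotientGroup.mk l'.prod = l.prod by
    obtain ⟨l', h1', h2', h3'⟩ := h
    exact ⟨l'.prod, ⟨l', h1', h2' ▸ h2, rfl⟩, h3'⟩
  clear h2
  induction l with
  | nil => exact ⟨[], by simp, by simp, by simp⟩
  | cons x t ih =>
    obtain ⟨l', h1', h2', h3'⟩ := ih (fun y hy => h1 y (List.mem_cons_of_mem _ hy))
    rcases h1 x List.mem_cons_self with h | h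
    · obtain ⟨s, hs, hsx⟩ := h
      exact ⟨s :: l', by intro y hy; rcases List.mem_cons.mp hy with rfl | hy; exacts [Or.inl hs, h1' y hy],
        by simp [h2'], by simp [hsx, h3']⟩
    · obtain ⟨s, hs, hsx⟩ := h
      refine ⟨s⁻¹ :: l', by intro y hy; rcases List.mem_cons.mp hy with rfl | hy; exacts [Or.inr (by simpa using hs), h1' y hy],
        by simp [h2'], ?_⟩
      have : (QuotientGroup.mk s⁻¹ : G ⧸ N) = x := by
        rw [← inv_inv x, ← hsx]; simp
      simp [this, h3']

/-- quotients by characteristic subgroups have smaller automorphic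
growth. -/
theorem automorphic_growth_quotient_le {G : Type*} [Group G]
    (S : Finset G) (hS : Subgroup.closure (S : Set G) = ⊤)
    (N : Subgroup G) [N.Normal]
    (hchar : ∀ φ : MulAut G, Subgroup.map φ.toMonoidHom N = N) :
    (∀ n : ℕ,
      autGrowth ((QuotientGroup.mk '' (S : Set G)) : Set (G ⧸ N)) n ≤
        autGrowth (S : Set G) n) ∧
    GrowthLe (autGrowth ((QuotientGroup.mk '' (S : Set G)) : Set (G ⧸ N)))
      (autGrowth (S : Set G)) := by
  have hmap : ∀ a b : G, (MulAction.orbitRel (MulAut G) G).r a b →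
      (MulAction.orbitRel (MulAut (G ⧸ N)) (G ⧸ N)).r (QuotientGroup.mk a)
        (QuotientGroup.mk b) := by
    intro a b hab
    obtain ⟨φ, hφ⟩ := hab
    refine ⟨QuotientGroup.congr N N (φ : G ≃* G) (hchar φ), ?_⟩
    show QuotientGroup.congr N N (φ : G ≃* G) (hchar φ) (QuotientGroup.mk b) = _
    show (QuotientGroup.mk (φ b) : G ⧸ N) = QuotientGroup.mk a
    rw [show φ b = a from hφ]
  let F : Quotient (MulAction.orbitRel (MulAut G) G) →
      Quotient (MulAction.orbitRel (MulAut (G ⧸ N)) (G ⧸ N)) :=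
    Quotient.map QuotientGroup.mk hmap
  have key : ∀ n : ℕ,
      Quotient.mk (MulAction.orbitRel (MulAut (G ⧸ N)) (G ⧸ N)) ''
        wordBall ((QuotientGroup.mk '' (S : Set G)) : Set (G ⧸ N)) n ⊆
      F '' (Quotient.mk (MulAction.orbitRel (MulAut G) G) '' wordBall (S : Set G) n) := by
    rintro n c ⟨q, hq, rfl⟩
    obtain ⟨g, hg, rfl⟩ := wordBall_lift (S : Set G) N n hq
    exact ⟨Quotient.mk _ g, ⟨g, hg, rfl⟩, rfl⟩
  have hfinG : ∀ n : ℕ,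
      (Quotient.mk (MulAction.orbitRel (MulAut G) G) '' wordBall (S : Set G) n).Finite :=
    fun n => (wordBall_finite S n).image _
  have main : ∀ n : ℕ,
      autGrowth ((QuotientGroup.mk '' (S : Set G)) : Set (G ⧸ N)) n ≤
        autGrowth (S : Set G) n := by
    intro n
    calc autGrowth ((QuotientGroup.mk '' (S : Set G)) : Set (G ⧸ N)) n
        ≤ (F '' (Quotient.mk (MulAction.orbitRel (MulAut G) G) ''
            wordBall (S : Set G) n)).ncard :=
          Set.ncard_le_ncard (key n) ((hfinG n).image F)
      _ ≤ autGrowth (S : Set G) n := Set.ncard_image_le (hfinG n)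
  refine ⟨main, 1, one_pos, fun n => ?_⟩
  have h1 : autGrowth (S : Set G) n ≤ autGrowth (S : Set G) (1 * n + 1) := by
    apply Set.ncard_le_ncard (Set.image_mono (wordBall_mono _ (by omega)))
      (hfinG (1 * n + 1))
  calc autGrowth ((QuotientGroup.mk '' (S : Set G)) : Set (G ⧸ N)) n
      ≤ autGrowth (S : Set G) n := main n
    _ ≤ 1 * autGrowth (S : Set G) (1 * n + 1) + 1 := by omega
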